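/- Let ħ, m > 0, let ω : ℝ → ℝ be differentiable with ω(t) > 0 for all t, let η, C, D : ℝ → ℝ be arbitrary functions and n : ℝ → ℝ differentiable. Define Λ(t,x) := − m ω(t) x² / (2ħ). Suppose that for all t ∈ ℝ and all x ∈ ℝ: η(t)·∂²Λ/∂x² + 2η(t)·(∂Λ/∂x)² + (2mC(t)/ħ)·( x·∂Λ/∂x + 1/2 ) + (2m²D(t)/ħ²)·∂Λ/∂x − (2m/ħ)·∂Λ/∂t = − ṅ(t). Then for every t: C(t) = η(t)ω(t) + ω̇(t)/(2ω(t)), D(t) = 0, and ṅ(t) = − m ω̇(t) / (2ħ ω(t)). -/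
import Mathlib


/-- One-body consistency condition for the harmonic trap: if
`Λ(t,x) = −mω(t)x²/(2ħ)` satisfies
`η ∂²ₓΛ + 2η (∂ₓΛ)² + (2mC/ħ)(x ∂ₓΛ + 1/2) + (2m²D/ħ²) ∂ₓΛ − (2m/ħ) ∂ₜΛ = −ṅ`
for all `t, x`, then `C = ηω + ω̇/(2ω)`, `D = 0` and `ṅ = −mω̇/(2ħω)`. -/
theorem stmt_6 (hbar m : ℝ) (hhbar : 0 < hbar) (hm : 0 < m)
    (ω : ℝ → ℝ) (hω : Differentiable ℝ ω) (hωpos : ∀ t, 0 < ω t)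
    (η C D : ℝ → ℝ) (n : ℝ → ℝ) (hn : Differentiable ℝ n)
    (Λ : ℝ → ℝ → ℝ) (hΛ : ∀ t x, Λ t x = - m * ω t * x ^ 2 / (2 * hbar))
    (hcond : ∀ t x : ℝ,
      η t * deriv (deriv (fun y => Λ t y)) x
        + 2 * η t * (deriv (fun y => Λ t y) x) ^ 2
        + (2 * m * C t / hbar) * (x * deriv (fun y => Λ t y) x + 1 / 2)
        + (2 * m ^ 2 * D t / hbar ^ 2) * deriv (fun y => Λ t y) x
        - (2 * m / hbar) * deriv (fun s => Λ s x) t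
      = - deriv n t) :
    ∀ t : ℝ, C t = η t * ω t + deriv ω t / (2 * ω t) ∧ D t = 0 ∧
      deriv n t = - m * deriv ω t / (2 * hbar * ω t) := by
  have hd1 : ∀ t x, deriv (fun y => Λ t y) x = - m * ω t * x / hbar := by
    intro t x
    have h : (fun y => Λ t y) = fun y : ℝ => (- m * ω t / (2 * hbar)) * y ^ 2 := by
      funext y; rw [hΛ]; ring
    rw [h, deriv_const_mul _ (by fun_prop)]
    simp [deriv_pow]
    ring
  have hd2 : ∀ t x, deriv (deriv (fun y => Λ t y)) x = - m * ω t / hbar := by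
    intro t x
    have h : deriv (fun y => Λ t y) = fun y : ℝ => (- m * ω t / hbar) * y := by
      funext y; rw [hd1]; ring
    rw [h]
    simpa using ((hasDerivAt_id x).const_mul (- m * ω t / hbar)).deriv
  have hdt : ∀ t x, deriv (fun s => Λ s x) t = (- m * x ^ 2 / (2 * hbar)) * deriv ω t := by
    intro t x
    have h : (fun s => Λ s x) = fun s : ℝ => (- m * x ^ 2 / (2 * hbar)) * ω s := by
      funext s; rw [hΛ]; ring
    rw [h, deriv_const_mul _ (hω t)]
  intro t
  have hωt := hωpos t
  have h0 := hcond t 0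
  have h1 := hcond t 1
  have h2 := hcond t (-1)
  rw [hd1, hd2, hdt] at h0 h1 h2
  have hD'' : D t * (4 * m ^ 3 * ω t / hbar ^ 3) = 0 := by
    linear_combination h2 - h1
  have hDeq : D t = 0 :=
    (mul_eq_zero.mp hD'').resolve_right (by positivity)
  have hA' : (2 * η t * (ω t) ^ 2 - 2 * C t * ω t + deriv ω t) * (2 * m ^ 2 / hbar ^ 2) = 0 := by
    linear_combination h1 + h2 - 2 * h0
  have hA2 : 2 * η t * (ω t) ^ 2 - 2 * C t * ω t + deriv ω t = 0 :=
    (mul_eq_zero.mp hA').resolve_right (by positivity)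
  have hK : (C t - η t * ω t) * (m / hbar) = - deriv n t := by
    linear_combination h0
  refine ⟨?_, hDeq, ?_⟩
  · field_simp
    linear_combination -hA2
  · field_simp at hK ⊢
    linear_combination m * hA2 + 2 * ω t * hK
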